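/- Let N be odd with char k ∤ N, let C ⊂ E(k) be cyclic of order N, and let s_O be a normalized rational function on E with divisor N·O − C. Then [−1]^* s_O = s_O, where [−1] is the inversion map of E. -/

import Mathlib

/-- An abstract model of the group of points and the function field of an elliptic curve `E`
over `k`, together with divisors, pullbacks along translations and inversion, and the
pushforward (norm) maps `[n]_*` along the multiplication-by-`n` isogenies. -/
structure CurveFn (k : Type) [Field k] where
  /-- the group of points `E(k)` (all points are closed since `k` is algebraically closed) -/
  Pt : Type
  [grp : AddCommGroup Pt]
  /-- the function field `k(E)` -/
  F : Type
  [fld : Field F]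
  [alg : Algebra k F]
  /-- the divisor of a nonzero rational function -/
  div : Fˣ → (Pt →₀ ℤ)
  div_mul : ∀ f g : Fˣ, div (f * g) = div f + div g
  div_degree : ∀ f : Fˣ, (div f).sum (fun _ n => n) = 0
  /-- the inclusion of the constants `k^× ⊆ k(E)^×` -/
  constU : kˣ →* Fˣ
  constU_spec : ∀ a : kˣ, ((constU a : Fˣ) : F) = algebraMap k F (a : k)
  div_constU : ∀ a : kˣ, div (constU a) = 0
  eq_constU_of_div_eq_zero : ∀ f : Fˣ, div f = 0 → ∃ a : kˣ, f = constU a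
  /-- pullback `τ_P^*` along translation by a point `P` -/
  tau : Pt → (F ≃+* F)
  tau_algebraMap : ∀ (P : Pt) (a : k), tau P (algebraMap k F a) = algebraMap k F a
  tau_zero : tau 0 = RingEquiv.refl F
  tau_add : ∀ P Q : Pt, tau (P + Q) = (tau Q).trans (tau P)
  div_tau : ∀ (P : Pt) (f : Fˣ),
    div (Units.map (tau P).toRingHom.toMonoidHom f) = (div f).mapDomain (fun x => x - P)
  /-- the pushforward (norm) `[n]_*` along multiplication by `n` -/
  pushNorm : ℕ → (Fˣ →* Fˣ)
  div_pushNorm : ∀ (n : ℕ) (f : Fˣ),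
    div (pushNorm n f) = (div f).mapDomain (fun P => (n : ℤ) • P)
  pushNorm_constU : ∀ (n : ℕ) (a : kˣ), pushNorm n (constU a) = constU (a ^ (n ^ 2))
  pushNorm_mul_eq : ∀ m n : ℕ, pushNorm (m * n) = (pushNorm m).comp (pushNorm n)
  pushNorm_tau : ∀ (n : ℕ) (P : Pt) (f : Fˣ),
    pushNorm n (Units.map (tau P).toRingHom.toMonoidHom f)
      = Units.map (tau (n • P)).toRingHom.toMonoidHom (pushNorm n f)
  /-- pullback `[-1]^*` along the inversion map of `E` -/
  negPull : F ≃+* F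
  negPull_algebraMap : ∀ a : k, negPull (algebraMap k F a) = algebraMap k F a
  negPull_negPull : ∀ x : F, negPull (negPull x) = x
  div_negPull : ∀ f : Fˣ,
    div (Units.map negPull.toRingHom.toMonoidHom f) = (div f).mapDomain (fun x => -x)
  negPull_tau : ∀ (P : Pt) (x : F), negPull (tau (-P) x) = tau P (negPull x)

attribute [instance] CurveFn.grp CurveFn.fld CurveFn.alg

variable {k : Type} [Field k]

/-- pullback along translation, on units -/
def CurveFn.tauU (X : CurveFn k) (P : X.Pt) : X.Fˣ →* X.Fˣ :=
  Units.map (X.tau P).toRingHom.toMonoidHom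

/-- pullback along inversion, on units -/
def CurveFn.negPullU (X : CurveFn k) : X.Fˣ →* X.Fˣ :=
  Units.map X.negPull.toRingHom.toMonoidHom

/-- `a` is a root of unity. -/
def IsRootOfUnity {M : Type*} [Monoid M] (a : M) : Prop := ∃ n : ℕ, 0 < n ∧ a ^ n = 1

/-- `f ∈ k(E)^×` is *normalized* if `[n]_* f` is a constant root of unity for some `n ≥ 1`. -/
def CurveFn.Normalized (X : CurveFn k) (f : X.Fˣ) : Prop :=
  ∃ n : ℕ, 0 < n ∧ ∃ u : kˣ, IsRootOfUnity u ∧ X.pushNorm n f = X.constU u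

/- ### Auxiliary lemmas -/

lemma CurveFn.constU_injective (X : CurveFn k) : Function.Injective X.constU := by
  intro a b h
  have h2 : algebraMap k X.F (a : k) = algebraMap k X.F (b : k) := by
    rw [← X.constU_spec, ← X.constU_spec, h]
  exact Units.ext ((algebraMap k X.F).injective h2)

lemma CurveFn.negPullU_coe (X : CurveFn k) (f : X.Fˣ) :
    ((X.negPullU f : X.Fˣ) : X.F) = X.negPull (f : X.F) := rfl

lemma CurveFn.tauU_coe (X : CurveFn k) (P : X.Pt) (f : X.Fˣ) :
    ((X.tauU P f : X.Fˣ) : X.F) = X.tau P (f : X.F) := rfl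

lemma CurveFn.negPullU_constU (X : CurveFn k) (a : kˣ) :
    X.negPullU (X.constU a) = X.constU a := by
  apply Units.ext
  rw [X.negPullU_coe, X.constU_spec, X.negPull_algebraMap]

lemma CurveFn.tauU_constU (X : CurveFn k) (P : X.Pt) (a : kˣ) :
    X.tauU P (X.constU a) = X.constU a := by
  apply Units.ext
  rw [X.tauU_coe, X.constU_spec, X.tau_algebraMap]

lemma CurveFn.negPullU_negPullU (X : CurveFn k) (f : X.Fˣ) :
    X.negPullU (X.negPullU f) = f := by
  apply Units.ext
  rw [X.negPullU_coe, X.negPullU_coe, X.negPull_negPull]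

lemma CurveFn.negPullU_tauU (X : CurveFn k) (P : X.Pt) (f : X.Fˣ) :
    X.negPullU (X.tauU P f) = X.tauU (-P) (X.negPullU f) := by
  apply Units.ext
  rw [X.negPullU_coe, X.tauU_coe, X.tauU_coe, X.negPullU_coe]
  have := X.negPull_tau (-P) (f : X.F)
  rwa [neg_neg] at this

lemma CurveFn.div_one (X : CurveFn k) : X.div 1 = 0 := by
  have := X.div_constU 1
  rwa [map_one] at this

lemma CurveFn.div_inv (X : CurveFn k) (f : X.Fˣ) : X.div f⁻¹ = -X.div f := by
  have h := X.div_mul f f⁻¹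
  rw [mul_inv_cancel, X.div_one] at h
  exact (eq_neg_of_add_eq_zero_right h.symm)

lemma CurveFn.div_negPullU (X : CurveFn k) (f : X.Fˣ) :
    X.div (X.negPullU f) = (X.div f).mapDomain (fun x => -x) := X.div_negPull f

lemma CurveFn.div_tauU (X : CurveFn k) (P : X.Pt) (f : X.Fˣ) :
    X.div (X.tauU P f) = (X.div f).mapDomain (fun x => x - P) := X.div_tau P f

lemma CurveFn.div_prod (X : CurveFn k) {ι : Type*} (t : Finset ι) (f : ι → X.Fˣ) :
    X.div (∏ i ∈ t, f i) = ∑ i ∈ t, X.div (f i) := by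
  classical
  induction t using Finset.cons_induction with
  | empty => simpa using X.div_one
  | cons i t hi ih =>
      rw [Finset.prod_cons, Finset.sum_cons, X.div_mul, ih]

/-- Let `N` be odd with `char k ∤ N`, let `C ⊂ E(k)` be cyclic of order `N`
(embedded via `ι : ZMod N ↪ E(k)`), and let `s_O` be a normalized rational function on `E` with
divisor `N·O − C`.  Then `[-1]^* s_O = s_O`. -/
theorem inversion_fixes_normalized_sO
    (k : Type) [Field k] [IsAlgClosed k] (X : CurveFn k)
    (N : ℕ) [NeZero N] (hodd : Odd N) (hchar : (N : k) ≠ 0)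
    (ι : ZMod N →+ X.Pt) (hι : Function.Injective ι)
    (s : X.Fˣ) (hs : X.Normalized s)
    (hdiv : X.div s =
      Finsupp.single (0 : X.Pt) (N : ℤ) - ∑ j : ZMod N, Finsupp.single (ι j) (1 : ℤ)) :
    X.negPull (s : X.F) = (s : X.F) := by
  classical
  set S : X.Pt →₀ ℤ := ∑ j : ZMod N, Finsupp.single (ι j) (1 : ℤ) with hS
  have mapD_sub : ∀ (g : X.Pt → X.Pt) (A B : X.Pt →₀ ℤ),
      Finsupp.mapDomain g (A - B) = A.mapDomain g - B.mapDomain g :=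
    fun g A B => map_sub (Finsupp.mapDomain.addMonoidHom g) A B
  have mapD_sum : ∀ (g : X.Pt → X.Pt) (B : ZMod N → X.Pt →₀ ℤ),
      Finsupp.mapDomain g (∑ j : ZMod N, B j) = ∑ j : ZMod N, (B j).mapDomain g :=
    fun g B => map_sum (Finsupp.mapDomain.addMonoidHom g) B Finset.univ
  -- Step 1: `div (negPullU s) = div s`
  have hdivneg : X.div (X.negPullU s) = X.div s := by
    rw [X.div_negPullU, hdiv, hS, mapD_sub, mapD_sum]
    simp only [Finsupp.mapDomain_single, neg_zero]
    congr 1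
    refine Fintype.sum_equiv (Equiv.neg (ZMod N)) _ _ (fun j => ?_)
    simp only [Equiv.neg_apply, map_neg]
  -- Step 2: the ratio is a constant `a`
  obtain ⟨a, ha⟩ := X.eq_constU_of_div_eq_zero (X.negPullU s * s⁻¹) (by
    rw [X.div_mul, X.div_inv, hdivneg, add_neg_cancel])
  have hns : X.negPullU s = X.constU a * s := mul_inv_eq_iff_eq_mul.mp ha
  -- Step 3: `a * a = 1`
  have ha2 : a * a = 1 := by
    have h1 : s = X.constU (a * a) * s := by
      conv_lhs => rw [← X.negPullU_negPullU s, hns, map_mul, X.negPullU_constU, hns,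
        ← mul_assoc, ← map_mul]
    have h2 : X.constU (a * a) = 1 := right_eq_mul.mp h1
    exact X.constU_injective (h2.trans (map_one X.constU).symm)
  -- Step 4: the product `T` over translates is constant
  set T : X.Fˣ := ∏ j : ZMod N, X.tauU (ι j) s with hT
  have hcard : (Finset.univ : Finset (ZMod N)).card = N := by
    rw [Finset.card_univ, ZMod.card]
  have hdivT : X.div T = 0 := by
    rw [hT, X.div_prod]
    have hterm : ∀ i : ZMod N, X.div (X.tauU (ι i) s)
        = Finsupp.single (ι (-i)) (N : ℤ) - ∑ j : ZMod N, Finsupp.single (ι (j - i)) (1 : ℤ) := by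
      intro i
      rw [X.div_tauU, hdiv, hS, mapD_sub, mapD_sum]
      simp only [Finsupp.mapDomain_single, zero_sub, ← map_neg ι, ← map_sub ι]
    simp only [hterm]
    rw [Finset.sum_sub_distrib]
    have h1 : ∑ i : ZMod N, Finsupp.single (ι (-i)) (N : ℤ)
        = ∑ i : ZMod N, Finsupp.single (ι i) (N : ℤ) :=
      Fintype.sum_equiv (Equiv.neg (ZMod N)) _ _ (fun i => rfl)
    have h2 : ∀ i : ZMod N, ∑ j : ZMod N, Finsupp.single (ι (j - i)) (1 : ℤ) = S :=
      fun i => Fintype.sum_equiv (Equiv.subRight i) _ _ (fun j => rfl)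
    simp only [h2, h1]
    rw [Finset.sum_const, hcard]
    rw [hS, Finset.smul_sum]
    rw [sub_eq_zero]
    refine Finset.sum_congr rfl (fun j _ => ?_)
    rw [Finsupp.smul_single]
    congr 1
    simp
  obtain ⟨c, hc⟩ := X.eq_constU_of_div_eq_zero T hdivT
  -- Step 5: `negPullU T = constU (a^N) * T`, hence `a ^ N = 1`
  have hnegT : X.negPullU T = X.constU (a ^ N) * T := by
    rw [hT, map_prod]
    have hterm : ∀ j : ZMod N,
        X.negPullU (X.tauU (ι j) s) = X.constU a * X.tauU (ι (-j)) s := by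
      intro j
      rw [X.negPullU_tauU, hns, map_mul, X.tauU_constU, ← map_neg ι]
    simp only [hterm]
    rw [Finset.prod_mul_distrib, Finset.prod_const, hcard, ← map_pow]
    congr 1
    exact Fintype.prod_equiv (Equiv.neg (ZMod N)) _ _ (fun j => rfl)
  have haN : a ^ N = 1 := by
    have hTc : X.negPullU T = T := by rw [hc, X.negPullU_constU]
    rw [hnegT] at hTc
    have h2 : X.constU (a ^ N) = 1 := right_eq_mul.mp hTc.symm
    exact X.constU_injective (h2.trans (map_one X.constU).symm)
  -- Step 6: `a = 1` since `N` is odd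
  obtain ⟨m, hm⟩ := hodd
  have ha1 : a = 1 := by
    have : a ^ N = a := by
      rw [hm, pow_add, pow_mul, pow_two, ha2, one_pow, one_mul, pow_one]
    rw [← haN, this]
  -- Conclusion
  have : X.negPullU s = s := by rw [hns, ha1, map_one, one_mul]
  calc X.negPull (s : X.F) = ((X.negPullU s : X.Fˣ) : X.F) := rfl
    _ = (s : X.F) := by rw [this]
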